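/- arXiv:1602.00232 — 3 statements merged into one kernel-verified Lean document; each statement's English description precedes it below -/
import Mathlib

section
/- Let h : [t₀, ∞) → [0, ∞) be of class C², γ > 0, and g : [t₀, ∞) → [0, ∞) integrable on [t₀, ∞). If ḧ(t) + γ ḣ(t) ≤ g(t) for all t ≥ t₀, then the positive part (ḣ)₊ of ḣ is integrable on [t₀, ∞), and consequently lim_{t→∞} h(t) exists. -/
open MeasureTheory Filter

lemma expdecay_int {γ : ℝ} (hγ : 0 < γ) (s : ℝ) :
    IntegrableOn (fun t => Real.exp (-(γ*t))) (Set.Ioi s) := by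
  simpa [neg_mul] using exp_neg_integrableOn_Ioi s hγ

lemma expdecay_val {γ : ℝ} (hγ : 0 < γ) (s : ℝ) :
    ∫ t in Set.Ioi s, Real.exp (-(γ*t)) = Real.exp (-(γ*s))/γ := by
  have hderiv : ∀ x ∈ Set.Ici s, HasDerivAt (fun t => -(1/γ) * Real.exp (-(γ*t)))
      (Real.exp (-(γ*x))) x := by
    intro x _
    have h1 : HasDerivAt (fun t : ℝ => -(γ*t)) (-γ) x := by
      simpa using ((hasDerivAt_id x).const_mul γ).fun_neg
    have h2 := (h1.exp).const_mul (-(1/γ))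
    refine h2.congr_deriv ?_
    field_simp
  have htend : Tendsto (fun t => -(1/γ) * Real.exp (-(γ*t))) atTop (nhds 0) := by
    have h3 : Tendsto (fun t : ℝ => -(γ*t)) atTop atBot := by
      apply Filter.tendsto_neg_atBot_iff.mpr
      exact Tendsto.const_mul_atTop hγ tendsto_id
    simpa using (Real.tendsto_exp_atBot.comp h3).const_mul (-(1/γ))
  rw [integral_Ioi_of_hasDerivAt_of_tendsto' hderiv (expdecay_int hγ s) htend]
  field_simp
  ring

lemma fubini_bound {γ t₀ T : ℝ} (hγ : 0 < γ) (hT : t₀ ≤ T) {g : ℝ → ℝ}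
    (hg0 : ∀ t ≥ t₀, 0 ≤ g t) (hgint : IntegrableOn g (Set.Ici t₀)) :
    ∫ t in Set.Ioc t₀ T, Real.exp (-(γ*t)) * (∫ s in t₀..t, Real.exp (γ*s) * g s)
      ≤ (∫ s in Set.Ici t₀, g s)/γ := by
  set μ := volume.restrict (Set.Ioc t₀ T) with hμ
  set k : ℝ → ℝ → ℝ := fun t s =>
    Set.indicator (Set.Ioc t₀ t) (fun u => Real.exp (γ*u - γ*t) * g u) s with hk_def
  have hgioc : Integrable g μ := hgint.mono_set (fun x hx => hx.1.le)
  -- measurability of uncurry k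
  have hgm : AEStronglyMeasurable g μ :=
    hgint.aestronglyMeasurable.mono_measure
      (Measure.restrict_mono (fun x hx => hx.1.le) le_rfl)
  have hF : AEStronglyMeasurable (fun p : ℝ×ℝ => Real.exp (γ*p.2 - γ*p.1) * g p.2) (μ.prod μ) :=
    (Continuous.aestronglyMeasurable (by continuity)).mul hgm.comp_snd
  have hA : MeasurableSet {p : ℝ×ℝ | t₀ < p.2 ∧ p.2 ≤ p.1} :=
    (measurableSet_lt measurable_const measurable_snd).inter
      (measurableSet_le measurable_snd measurable_fst)
  have huk : Function.uncurry k = Set.indicator {p : ℝ×ℝ | t₀ < p.2 ∧ p.2 ≤ p.1}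
      (fun p => Real.exp (γ*p.2 - γ*p.1) * g p.2) := by
    funext p
    rcases p with ⟨t, s⟩
    simp [Function.uncurry, hk_def, Set.indicator_apply, Set.mem_Ioc, Set.mem_setOf_eq]
  have hkmeas : AEStronglyMeasurable (Function.uncurry k) (μ.prod μ) := by
    rw [huk]; exact hF.indicator hA
  -- integrability of uncurry k
  have hdom : Integrable (fun p : ℝ×ℝ => (1:ℝ) * g p.2) (μ.prod μ) :=
    Integrable.mul_prod (f := fun _ : ℝ => (1:ℝ)) (integrableOn_const (C := (1:ℝ)) (μ := volume) measure_Ioc_lt_top.ne : IntegrableOn (fun _ => (1:ℝ)) (Set.Ioc t₀ T) volume) hgioc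
  have hk : Integrable (Function.uncurry k) (μ.prod μ) := by
    refine hdom.mono hkmeas (Eventually.of_forall ?_)
    rintro ⟨t, s⟩
    by_cases hs : s ∈ Set.Ioc t₀ t
    · have hst : γ*s - γ*t ≤ 0 := by nlinarith [hs.2]
      simp only [Function.uncurry, hk_def, Set.indicator_of_mem hs, one_mul,
        Real.norm_eq_abs, abs_mul, Real.abs_exp]
      exact mul_le_of_le_one_left (abs_nonneg _) (Real.exp_le_one_iff.mpr hst)
    · simp [Function.uncurry, hk_def, Set.indicator_of_notMem hs]
  -- (i) inner integral equals the desired integrand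
  have hi : ∀ t ∈ Set.Ioc t₀ T,
      (Real.exp (-(γ*t)) * (∫ s in t₀..t, Real.exp (γ*s) * g s)) = ∫ s, k t s ∂μ := by
    intro t ht
    have hsub : Set.Ioc t₀ t ⊆ Set.Ioc t₀ T := Set.Ioc_subset_Ioc_right ht.2
    rw [hk_def]
    simp only
    rw [integral_indicator measurableSet_Ioc, hμ, Measure.restrict_restrict measurableSet_Ioc,
      Set.inter_eq_left.2 hsub, ← intervalIntegral.integral_of_le ht.1.le]
    rw [← intervalIntegral.integral_const_mul]
    apply intervalIntegral.integral_congr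
    intro s _
    simp only
    rw [Real.exp_sub, Real.exp_neg]
    ring
  calc ∫ t in Set.Ioc t₀ T, Real.exp (-(γ*t)) * (∫ s in t₀..t, Real.exp (γ*s) * g s)
      = ∫ t, (∫ s, k t s ∂μ) ∂μ := setIntegral_congr_fun measurableSet_Ioc hi
    _ = ∫ s, (∫ t, k t s ∂μ) ∂μ := integral_integral_swap hk
    _ ≤ ∫ s, g s / γ ∂μ := by
        refine integral_mono_ae ?_ (hgioc.div_const γ) ?_
        · simpa [Function.uncurry] using hk.integral_prod_right
        · filter_upwards [ae_restrict_mem measurableSet_Ioc] with s hs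
          have hgs : 0 ≤ g s := hg0 s hs.1.le
          have hint : IntegrableOn (fun t => Real.exp (γ*s - γ*t) * g s) (Set.Ici s) := by
            have : IntegrableOn (fun t => Real.exp (-(γ*t)) * (Real.exp (γ*s) * g s))
                (Set.Ici s) := by
              rw [integrableOn_Ici_iff_integrableOn_Ioi]
              exact (expdecay_int hγ s).mul_const _
            refine this.congr_fun (fun t _ => ?_) measurableSet_Ici
            rw [Real.exp_sub]; simp only [Real.exp_neg]
            ring
          have hks : (fun t => k t s)
              = Set.indicator (Set.Ici s) (fun t => Real.exp (γ*s - γ*t) * g s) := by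
            funext t
            simp only [hk_def, Set.indicator_apply, Set.mem_Ioc, Set.mem_Ici]
            by_cases hts : s ≤ t
            · simp [hts, hs.1]
            · simp [hts]
          calc ∫ t, k t s ∂μ
              = ∫ t in Set.Ici s ∩ Set.Ioc t₀ T, Real.exp (γ*s - γ*t) * g s := by
                rw [hks, integral_indicator measurableSet_Ici, hμ,
                  Measure.restrict_restrict measurableSet_Ici]
            _ ≤ ∫ t in Set.Ici s, Real.exp (γ*s - γ*t) * g s := by
                refine setIntegral_mono_set hint ?_ (Eventually.of_forall Set.inter_subset_left)
                exact Eventually.of_forall fun t => mul_nonneg (Real.exp_pos _).le hgs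
            _ = g s / γ := by
                rw [integral_Ici_eq_integral_Ioi]
                have : ∀ t : ℝ, Real.exp (γ*s - γ*t) * g s
                    = (Real.exp (γ*s) * g s) * Real.exp (-(γ*t)) := by
                  intro t; rw [Real.exp_sub, Real.exp_neg]; ring
                simp_rw [this]
                rw [integral_const_mul, expdecay_val hγ s, Real.exp_neg]
                field_simp
    _ = (∫ s in Set.Ioc t₀ T, g s) / γ := integral_div γ g
    _ ≤ (∫ s in Set.Ici t₀, g s)/γ := by
        refine div_le_div_of_nonneg_right ?_ hγ.le
        refine setIntegral_mono_set hgint ?_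
          (Eventually.of_forall (fun x (hx : x ∈ Set.Ioc t₀ T) => hx.1.le))
        filter_upwards [ae_restrict_mem measurableSet_Ici] with s hs using hg0 s hs

theorem stmt_2 (t₀ γ : ℝ) (hγ : 0 < γ)
    (h h' h'' : ℝ → ℝ)
    (hnonneg : ∀ t ≥ t₀, 0 ≤ h t)
    (hd1 : ∀ t, HasDerivAt h (h' t) t)
    (hd2 : ∀ t, HasDerivAt h' (h'' t) t)
    (hcont : Continuous h'')
    (g : ℝ → ℝ) (hg0 : ∀ t ≥ t₀, 0 ≤ g t)
    (hgint : IntegrableOn g (Set.Ici t₀))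
    (hineq : ∀ t ≥ t₀, h'' t + γ * h' t ≤ g t) :
    IntegrableOn (fun t => max (h' t) 0) (Set.Ici t₀) ∧
    ∃ L : ℝ, Tendsto h atTop (nhds L) := by
  have hh' : Continuous h' := continuous_iff_continuousAt.2 fun t => (hd2 t).continuousAt
  have hplus : Continuous (fun t => max (h' t) 0) := hh'.max continuous_const
  set Ψ : ℝ → ℝ := fun t => ∫ s in t₀..t, Real.exp (γ*s) * g s with hΨdef
  set G : ℝ := ∫ s in Set.Ici t₀, g s with hGdef
  have hG0 : 0 ≤ G := setIntegral_nonneg measurableSet_Ici hg0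
  have hgm : ∀ b : ℝ, IntegrableOn (fun s => Real.exp (γ*s) * g s) (Set.Ioc t₀ b) := by
    intro b
    have h1 : IntegrableOn g (Set.Ioc t₀ b) := hgint.mono_set (fun x hx => hx.1.le)
    refine h1.bdd_mul (c := Real.exp (γ*b))
      ((Real.continuous_exp.comp (continuous_const.mul continuous_id)).aestronglyMeasurable) ?_
    filter_upwards [ae_restrict_mem measurableSet_Ioc] with x hx
    rw [Real.norm_eq_abs, abs_of_pos (Real.exp_pos _)]
    exact Real.exp_le_exp.mpr (by nlinarith [hx.2])
  have key : ∀ t ≥ t₀, h' t ≤ Real.exp (-(γ*t)) * (Real.exp (γ*t₀) * h' t₀ + Ψ t) := by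
    intro t ht
    have hφd : ∀ s, HasDerivAt (fun u => Real.exp (γ*u) * h' u)
        (Real.exp (γ*s) * (h'' s + γ * h' s)) s := by
      intro s
      have h1 : HasDerivAt (fun u : ℝ => Real.exp (γ*u)) (Real.exp (γ*s) * γ) s := by
        simpa using (((hasDerivAt_id s).const_mul γ).exp)
      have h2 := h1.fun_mul (hd2 s)
      refine h2.congr_deriv ?_
      ring
    have hci : Continuous fun s => Real.exp (γ*s) * (h'' s + γ * h' s) := by
      continuity
    have hFTC := intervalIntegral.integral_eq_sub_of_hasDerivAt
      (f := fun u => Real.exp (γ*u) * h' u) (fun s _ => hφd s) (hci.intervalIntegrable t₀ t)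
    have hmono : (∫ s in t₀..t, Real.exp (γ*s) * (h'' s + γ * h' s)) ≤ Ψ t := by
      refine intervalIntegral.integral_mono_on ht (hci.intervalIntegrable t₀ t) ?_ ?_
      · rw [intervalIntegrable_iff_integrableOn_Ioc_of_le ht]
        exact hgm t
      · intro s hs
        exact mul_le_mul_of_nonneg_left (hineq s hs.1) (Real.exp_pos _).le
    have hle : Real.exp (γ*t) * h' t ≤ Real.exp (γ*t₀) * h' t₀ + Ψ t := by
      rw [hFTC] at hmono
      have hmono' : Real.exp (γ*t) * h' t - Real.exp (γ*t₀) * h' t₀ ≤ Ψ t := hmono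
      linarith
    have hmul := mul_le_mul_of_nonneg_left hle (Real.exp_pos (-(γ*t))).le
    calc h' t = Real.exp (-(γ*t)) * (Real.exp (γ*t) * h' t) := by
          rw [Real.exp_neg]; field_simp
      _ ≤ Real.exp (-(γ*t)) * (Real.exp (γ*t₀) * h' t₀ + Ψ t) := hmul
  have hΨ0 : ∀ t ≥ t₀, 0 ≤ Ψ t := fun t ht =>
    intervalIntegral.integral_nonneg ht fun s hs => mul_nonneg (Real.exp_pos _).le (hg0 s hs.1)
  have hB : ∀ t ≥ t₀, max (h' t) 0 ≤
      |h' t₀| * Real.exp (γ*t₀) * Real.exp (-(γ*t)) + Real.exp (-(γ*t)) * Ψ t := by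
    intro t ht
    have h1 := key t ht
    have h2 := hΨ0 t ht
    have e1 := (Real.exp_pos (-(γ*t))).le
    have e2 := (Real.exp_pos (γ*t₀)).le
    have h3 := le_abs_self (h' t₀)
    apply max_le
    · nlinarith [mul_nonneg (mul_nonneg e1 e2) (sub_nonneg.2 h3)]
    · have h4 := mul_nonneg e1 h2
      positivity
  set M : ℝ := |h' t₀| * Real.exp (γ*t₀) * (Real.exp (-(γ*t₀))/γ) + G/γ with hMdef
  have hM0 : 0 ≤ M := by positivity
  have hMb : ∀ T, t₀ ≤ T → (∫ t in t₀..T, max (h' t) 0) ≤ M := by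
    intro T hT
    have hΨc : ContinuousOn Ψ (Set.Icc t₀ T) := by
      have hint : IntegrableOn (fun s => Real.exp (γ*s) * g s) (Set.Icc t₀ T) := by
        rw [integrableOn_Icc_iff_integrableOn_Ioc]
        exact hgm T
      refine (intervalIntegral.continuousOn_primitive hint).congr ?_
      intro x hx
      rw [hΨdef]
      simp only
      rw [intervalIntegral.integral_of_le hx.1]
    have hB1int : IntervalIntegrable
        (fun t => |h' t₀| * Real.exp (γ*t₀) * Real.exp (-(γ*t))) volume t₀ T :=
      Continuous.intervalIntegrable (by continuity) t₀ T
    have hB2int : IntervalIntegrable (fun t => Real.exp (-(γ*t)) * Ψ t) volume t₀ T := by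
      apply ContinuousOn.intervalIntegrable
      rw [Set.uIcc_of_le hT]
      exact ((Real.continuous_exp.comp (continuous_const.mul continuous_id).neg).continuousOn).mul hΨc
    have step1 : (∫ t in t₀..T, max (h' t) 0) ≤
        ∫ t in t₀..T, (|h' t₀| * Real.exp (γ*t₀) * Real.exp (-(γ*t)) + Real.exp (-(γ*t)) * Ψ t) := by
      refine intervalIntegral.integral_mono_on hT (hplus.intervalIntegrable t₀ T)
        (hB1int.add hB2int) ?_
      intro s hs
      exact hB s hs.1
    have hexpIoc : (∫ t in t₀..T, Real.exp (-(γ*t))) ≤ Real.exp (-(γ*t₀))/γ := by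
      rw [intervalIntegral.integral_of_le hT, ← expdecay_val hγ t₀]
      refine setIntegral_mono_set (expdecay_int hγ t₀) ?_
        (Eventually.of_forall Set.Ioc_subset_Ioi_self)
      exact Eventually.of_forall fun t => (Real.exp_pos _).le
    have hterm1 : (∫ t in t₀..T, |h' t₀| * Real.exp (γ*t₀) * Real.exp (-(γ*t)))
        ≤ |h' t₀| * Real.exp (γ*t₀) * (Real.exp (-(γ*t₀))/γ) := by
      rw [intervalIntegral.integral_const_mul]
      exact mul_le_mul_of_nonneg_left hexpIoc (by positivity)
    have hterm2 : (∫ t in t₀..T, Real.exp (-(γ*t)) * Ψ t) ≤ G/γ := by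
      rw [intervalIntegral.integral_of_le hT]
      exact fubini_bound hγ hT hg0 hgint
    have hadd := intervalIntegral.integral_add hB1int hB2int
    rw [hadd] at step1
    rw [hMdef]
    linarith
  have hIoi : IntegrableOn (fun t => max (h' t) 0) (Set.Ioi t₀) := by
    refine integrableOn_Ioi_of_intervalIntegral_norm_bounded (μ := volume) (b := fun T : ℝ => T) M t₀
      (fun i => (hplus.integrableOn_Ioc : IntegrableOn _ (Set.Ioc t₀ i) volume)) tendsto_id ?_
    filter_upwards [eventually_ge_atTop t₀] with T hT
    have heq : (∫ t in t₀..T, ‖max (h' t) 0‖) = ∫ t in t₀..T, max (h' t) 0 :=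
      intervalIntegral.integral_congr fun t _ => Real.norm_of_nonneg (le_max_right _ _)
    rw [heq]
    exact hMb T hT
  have hIci : IntegrableOn (fun t => max (h' t) 0) (Set.Ici t₀) :=
    (integrableOn_Ici_iff_integrableOn_Ioi).mpr hIoi
  refine ⟨hIci, ?_⟩
  set P : ℝ → ℝ := fun T => ∫ t in t₀..T, max (h' t) 0 with hPdef
  set N : ℝ → ℝ := fun T => ∫ t in t₀..T, max (-h' t) 0 with hNdef
  have hNc : Continuous fun t => max (-h' t) 0 := hh'.neg.max continuous_const
  have hPm : Monotone P := by
    intro a b hab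
    have hadd := intervalIntegral.integral_add_adjacent_intervals (μ := volume)
      (hplus.intervalIntegrable t₀ a) (hplus.intervalIntegrable a b)
    have h2 : 0 ≤ ∫ t in a..b, max (h' t) 0 :=
      intervalIntegral.integral_nonneg hab fun u _ => le_max_right _ _
    simp only [hPdef]
    linarith
  have hNm : Monotone N := by
    intro a b hab
    have hadd := intervalIntegral.integral_add_adjacent_intervals (μ := volume)
      (hNc.intervalIntegrable t₀ a) (hNc.intervalIntegrable a b)
    have h2 : 0 ≤ ∫ t in a..b, max (-h' t) 0 :=
      intervalIntegral.integral_nonneg hab fun u _ => le_max_right _ _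
    simp only [hNdef]
    linarith
  have hPb : ∀ T, P T ≤ M := by
    intro T
    rcases le_total t₀ T with hT | hT
    · exact hMb T hT
    · calc P T ≤ P t₀ := hPm hT
        _ = 0 := intervalIntegral.integral_same
        _ ≤ M := hM0
  have hhT : ∀ T, h T = h t₀ + (P T - N T) := by
    intro T
    have hFTC : (∫ t in t₀..T, h' t) = h T - h t₀ :=
      intervalIntegral.integral_eq_sub_of_hasDerivAt (fun s _ => hd1 s)
        (hh'.intervalIntegrable t₀ T)
    have hsplit : (∫ t in t₀..T, h' t) = P T - N T := by
      rw [hPdef, hNdef]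
      simp only
      rw [← intervalIntegral.integral_sub (hplus.intervalIntegrable t₀ T)
        (hNc.intervalIntegrable t₀ T)]
      exact intervalIntegral.integral_congr fun t _ =>
        (max_zero_sub_max_neg_zero_eq_self (h' t)).symm
    linarith
  have hNb : ∀ T, N T ≤ h t₀ + M := by
    intro T
    rcases le_total t₀ T with hT | hT
    · have h1 := hhT T
      have h2 := hnonneg T hT
      have h3 := hPb T
      linarith
    · calc N T ≤ N t₀ := hNm hT
        _ = 0 := intervalIntegral.integral_same
        _ ≤ h t₀ + M := by linarith [hnonneg t₀ le_rfl]
  have hPlim : Tendsto P atTop (nhds (⨆ T, P T)) :=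
    tendsto_atTop_ciSup hPm ⟨M, by rintro x ⟨T, rfl⟩; exact hPb T⟩
  have hNlim : Tendsto N atTop (nhds (⨆ T, N T)) :=
    tendsto_atTop_ciSup hNm ⟨h t₀ + M, by rintro x ⟨T, rfl⟩; exact hNb T⟩
  refine ⟨h t₀ + ((⨆ T, P T) - ⨆ T, N T), ?_⟩
  exact (tendsto_const_nhds.add (hPlim.sub hNlim)).congr fun T => (hhT T).symm
end

section
/- Under the same assumptions as in the energy identity for (MIG) (Φ, Ψ convex C¹, Ψ bounded below, Φ bounded below, γ > 0, ε nonincreasing positive C¹ and bounded), every C² solution x of ẍ + γẋ + ∇Φ(x) + ε(t)∇Ψ(x) = 0 on [0,∞) satisfies ∫₀^∞ ‖ẋ(t)‖² dt < ∞ and sup_{t≥0} ‖ẋ(t)‖ < ∞. -/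
open MeasureTheory

theorem stmt_4 {H : Type*} [NormedAddCommGroup H] [InnerProductSpace ℝ H] [CompleteSpace H]
    (γ : ℝ) (hγ : 0 < γ)
    (Φ Ψ : H → ℝ) (Φ' Ψ' : H → H)
    (hΦconv : ConvexOn ℝ Set.univ Φ) (hΨconv : ConvexOn ℝ Set.univ Ψ)
    (hΦ : ∀ u, HasGradientAt Φ (Φ' u) u) (hΨ : ∀ u, HasGradientAt Ψ (Ψ' u) u)
    (hΦbdd : BddBelow (Set.range Φ)) (hΨbdd : BddBelow (Set.range Ψ))
    (ε ε' : ℝ → ℝ) (hεpos : ∀ t ≥ 0, 0 < ε t) (hεanti : AntitoneOn ε (Set.Ici 0))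
    (hεd : ∀ t, HasDerivAt ε (ε' t) t)
    (x x' x'' : ℝ → H)
    (hx : ∀ t, HasDerivAt x (x' t) t) (hx' : ∀ t, HasDerivAt x' (x'' t) t)
    (hode : ∀ t ≥ (0 : ℝ), x'' t + γ • x' t + Φ' (x t) + ε t • Ψ' (x t) = 0) :
    IntegrableOn (fun t => ‖x' t‖ ^ 2) (Set.Ici 0) ∧
    ∃ M : ℝ, ∀ t ≥ (0 : ℝ), ‖x' t‖ ≤ M := by
  obtain ⟨cΦ, hcΦ⟩ := hΦbdd
  obtain ⟨cΨ, hcΨ⟩ := hΨbdd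
  have hcΦ' : ∀ u, cΦ ≤ Φ u := fun u => hcΦ ⟨u, rfl⟩
  have hcΨ' : ∀ u, cΨ ≤ Ψ u := fun u => hcΨ ⟨u, rfl⟩
  have hx'cont : Continuous x' := by
    rw [continuous_iff_continuousAt]; exact fun t => (hx' t).continuousAt
  have hcont : Continuous fun t => ‖x' t‖ ^ 2 := by
    exact (hx'cont.norm).pow 2
  -- energy function
  set g : ℝ → ℝ := fun T => (inner ℝ (x' T) (x' T) : ℝ) / 2 + Φ (x T)
      + ε T * (Ψ (x T) - cΨ) + γ * ∫ t in (0:ℝ)..T, ‖x' t‖ ^ 2 with hg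
  have hgderiv : ∀ T : ℝ, HasDerivAt g
      (((inner ℝ (x' T) (x'' T) : ℝ) + (inner ℝ (x'' T) (x' T) : ℝ)) / 2
        + (inner ℝ (Φ' (x T)) (x' T) : ℝ)
        + (ε' T * (Ψ (x T) - cΨ) + ε T * (inner ℝ (Ψ' (x T)) (x' T) : ℝ))
        + γ * ‖x' T‖ ^ 2) T := by
    intro T
    have h1 : HasDerivAt (fun t => (inner ℝ (x' t) (x' t) : ℝ))
        ((inner ℝ (x' T) (x'' T) : ℝ) + (inner ℝ (x'' T) (x' T) : ℝ)) T :=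
      (hx' T).inner ℝ (hx' T)
    have h2 : HasDerivAt (fun t => Φ (x t)) (inner ℝ (Φ' (x T)) (x' T) : ℝ) T := by
      have := ((hΦ (x T)).hasFDerivAt.comp_hasDerivAt T (hx T))
      simp at this; exact this
    have h2' : HasDerivAt (fun t => Ψ (x t)) (inner ℝ (Ψ' (x T)) (x' T) : ℝ) T := by
      have := ((hΨ (x T)).hasFDerivAt.comp_hasDerivAt T (hx T))
      simp at this; exact this
    have h3 : HasDerivAt (fun t => ε t * (Ψ (x t) - cΨ))
        (ε' T * (Ψ (x T) - cΨ) + ε T * (inner ℝ (Ψ' (x T)) (x' T) : ℝ)) T :=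
      (hεd T).mul (h2'.sub_const cΨ)
    have h4 : HasDerivAt (fun T => ∫ t in (0:ℝ)..T, ‖x' t‖ ^ 2) (‖x' T‖ ^ 2) T :=
      intervalIntegral.integral_hasDerivAt_right (hcont.intervalIntegrable 0 T)
        hcont.aestronglyMeasurable.stronglyMeasurableAtFilter hcont.continuousAt
    exact (((h1.div_const 2).add h2).add h3).add (h4.const_mul γ)
  have hε'le : ∀ t > (0:ℝ), ε' t ≤ 0 := by
    intro t ht
    have hslope : Filter.Tendsto (slope ε t) (nhdsWithin t (Set.Ioi t)) (nhds (ε' t)) :=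
      ((hasDerivAt_iff_tendsto_slope.1 (hεd t)).mono_left
        (nhdsWithin_mono t fun s hs => ne_of_gt hs))
    refine le_of_tendsto hslope ?_
    filter_upwards [self_mem_nhdsWithin] with s hs
    have hst : t < s := hs
    have : ε s ≤ ε t := hεanti (le_of_lt ht) (le_of_lt (ht.trans hst)) hst.le
    have hpos : (0:ℝ) < s - t := sub_pos.2 hst
    rw [slope_def_field]
    exact div_nonpos_iff.2 (Or.inr ⟨sub_nonpos.2 this, hpos.le⟩)
  have hganti : AntitoneOn g (Set.Ici 0) := by
    apply antitoneOn_of_deriv_nonpos (convex_Ici 0)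
    · exact fun t _ => ((hgderiv t).continuousAt).continuousWithinAt
    · exact fun t _ => ((hgderiv t).differentiableAt).differentiableWithinAt
    · intro t ht
      rw [interior_Ici] at ht
      rw [(hgderiv t).deriv]
      have hodet := hode t (le_of_lt ht)
      have hx'' : x'' t = -(γ • x' t) - Φ' (x t) - ε t • Ψ' (x t) := by
        have := hodet
        rw [add_eq_zero_iff_eq_neg] at this
        · abel_nf
          abel_nf at this
          linear_combination (norm := module) this
      have hinner : (inner ℝ (x'' t) (x' t) : ℝ)
          = -(γ * (inner ℝ (x' t) (x' t) : ℝ)) - (inner ℝ (Φ' (x t)) (x' t) : ℝ)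
            - ε t * (inner ℝ (Ψ' (x t)) (x' t) : ℝ) := by
        rw [hx'']
        simp [inner_sub_left, inner_smul_left, inner_neg_left]
      have hsymm : (inner ℝ (x' t) (x'' t) : ℝ) = (inner ℝ (x'' t) (x' t) : ℝ) :=
        real_inner_comm _ _
      have hnorm : ‖x' t‖ ^ 2 = (inner ℝ (x' t) (x' t) : ℝ) :=
        (real_inner_self_eq_norm_sq _).symm
      rw [hsymm, hinner, hnorm]
      have : ε' t * (Ψ (x t) - cΨ) ≤ 0 :=
        mul_nonpos_of_nonpos_of_nonneg (hε'le t ht) (sub_nonneg.2 (hcΨ' _))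
      nlinarith [this]
  -- key bound
  set K : ℝ := g 0 - cΦ with hK
  have hbound : ∀ T ≥ (0:ℝ),
      ‖x' T‖ ^ 2 / 2 + γ * ∫ t in (0:ℝ)..T, ‖x' t‖ ^ 2 ≤ K := by
    intro T hT
    have h := hganti (Set.self_mem_Ici) hT hT
    have h1 : cΦ ≤ Φ (x T) := hcΦ' _
    have h2 : 0 ≤ ε T * (Ψ (x T) - cΨ) :=
      mul_nonneg (hεpos T hT).le (sub_nonneg.2 (hcΨ' _))
    have hgval : g T = ‖x' T‖ ^ 2 / 2 + Φ (x T) + ε T * (Ψ (x T) - cΨ)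
        + γ * ∫ t in (0:ℝ)..T, ‖x' t‖ ^ 2 := by
      simp only [hg]; rw [real_inner_self_eq_norm_sq]
    rw [hgval] at h
    rw [hK]
    linarith [h, h1, h2]
  have hintnn : ∀ T : ℝ, 0 ≤ T → 0 ≤ ∫ t in (0:ℝ)..T, ‖x' t‖ ^ 2 := by
    intro T hT
    exact intervalIntegral.integral_nonneg hT (fun u _ => sq_nonneg _)
  constructor
  · rw [← Set.Ioi_union_left, integrableOn_union]
    constructor
    · apply integrableOn_Ioi_of_intervalIntegral_norm_bounded (K / γ) 0
        (fun i : ℝ => (hcont.integrableOn_Ioc)) Filter.tendsto_id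
      filter_upwards [Filter.eventually_ge_atTop (0:ℝ)] with T hT
      have hnn : (fun t : ℝ => ‖(‖x' t‖ ^ 2)‖) = fun t : ℝ => ‖x' t‖ ^ 2 := by
        funext t; exact Real.norm_of_nonneg (sq_nonneg _)
      simp only [id_eq, hnn]
      have hb := hbound T hT
      have := sq_nonneg ‖x' T‖
      rw [div_eq_inv_mul, ← mul_le_mul_iff_of_pos_left hγ]
      calc γ * ∫ t in (0:ℝ)..T, ‖x' t‖ ^ 2 ≤ K := by linarith
        _ = γ * (γ⁻¹ * K) := by field_simp
    · exact (integrableOn_singleton_iff (by simp)).mpr (Or.inr (by simp))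
  · refine ⟨Real.sqrt (2 * K), fun t ht => ?_⟩
    have hb := hbound t ht
    have hint := hintnn t ht
    have h2K : ‖x' t‖ ^ 2 ≤ 2 * K := by nlinarith
    have hKnn : 0 ≤ 2 * K := le_trans (sq_nonneg _) h2K
    exact (Real.le_sqrt (norm_nonneg _) hKnn).2 h2K
end

section
/- Let H be a Hilbert space, γ > 0, Φ, Ψ : H → ℝ convex and C¹ with min Φ = 0 and C = argmin Φ nonempty, ε : [0,∞) → (0,∞). Let z ∈ C and p ∈ N_C(z) with −p = ∇Ψ(z). Let x : [0,∞) → H be a C² solution of ẍ + γẋ + ∇Φ(x) + ε(t)∇Ψ(x) = 0, and set h(t) = (1/2)‖x(t) − z‖². Then for all t ≥ 0: ḧ(t) + γ ḣ(t) ≤ [Φ*(ε(t)p) − σ_C(ε(t)p)] + ‖ẋ(t)‖². -/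
open scoped RealInnerProductSpace

/-- Fenchel conjugate (with values in `EReal`). -/
noncomputable def fenchelConj {H : Type*} [NormedAddCommGroup H] [InnerProductSpace ℝ H]
    (Φ : H → ℝ) (y : H) : EReal :=
  ⨆ x : H, ((⟪y, x⟫ - Φ x : ℝ) : EReal)

/-- Support function of a set (with values in `EReal`). -/
noncomputable def suppFn {H : Type*} [NormedAddCommGroup H] [InnerProductSpace ℝ H]
    (C : Set H) (y : H) : EReal :=
  ⨆ x ∈ C, ((⟪y, x⟫ : ℝ) : EReal)

/-- First-order condition for convex differentiable functions. -/
lemma grad_le_aux {H : Type*} [NormedAddCommGroup H] [InnerProductSpace ℝ H] [CompleteSpace H]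
    {f : H → ℝ} (hf : ConvexOn ℝ Set.univ f) {u g : H} (hg : HasGradientAt f g u) (v : H) :
    f u + ⟪g, v - u⟫ ≤ f v := by
  set φ : ℝ → ℝ := fun s => f (u + s • (v - u)) with hφdef
  have hcurve : HasDerivAt (fun s : ℝ => u + s • (v - u)) (v - u) 0 := by
    simpa using ((hasDerivAt_id (0:ℝ)).smul_const (v - u)).const_add u
  have hφ0 : HasDerivAt φ ⟪g, v - u⟫ 0 := by
    have h0 : HasFDerivAt f ((InnerProductSpace.toDual ℝ H) g) (u + (0:ℝ) • (v - u)) := by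
      simpa using hg.hasFDerivAt
    exact h0.comp_hasDerivAt 0 hcurve
  rw [hasDerivAt_iff_tendsto_slope] at hφ0
  have hmono : Filter.Tendsto (slope φ 0) (nhdsWithin 0 (Set.Ioi 0)) (nhds ⟪g, v - u⟫) :=
    hφ0.mono_left (nhdsWithin_mono 0 (fun s hs => ne_of_gt hs))
  have hle : ⟪g, v - u⟫ ≤ f v - f u := by
    refine le_of_tendsto hmono ?_
    filter_upwards [Ioc_mem_nhdsGT one_pos] with s hs
    have hs0 : 0 < s := hs.1
    have hs1 : s ≤ 1 := hs.2
    have hconv := hf.2 (Set.mem_univ u) (Set.mem_univ v) (by linarith : (0:ℝ) ≤ 1 - s)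
      (le_of_lt hs0) (by ring)
    have heq : u + s • (v - u) = (1 - s) • u + s • v := by
      simp [smul_sub, sub_smul]; abel
    have hφs : φ s ≤ (1 - s) * f u + s * f v := by
      rw [hφdef]; simp only [heq]; simpa using hconv
    have hφ00 : φ 0 = f u := by simp [hφdef]
    rw [slope_def_field, sub_zero, div_le_iff₀ hs0]
    nlinarith [hφs, hφ00]
  linarith

theorem stmt_10 {H : Type*} [NormedAddCommGroup H] [InnerProductSpace ℝ H] [CompleteSpace H]
    (γ : ℝ) (hγ : 0 < γ)
    (Φ Ψ : H → ℝ) (Φ' Ψ' : H → H)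
    (hΦconv : ConvexOn ℝ Set.univ Φ) (hΨconv : ConvexOn ℝ Set.univ Ψ)
    (hΦ : ∀ u, HasGradientAt Φ (Φ' u) u) (hΨ : ∀ u, HasGradientAt Ψ (Ψ' u) u)
    (hΦnonneg : ∀ u, 0 ≤ Φ u)
    (C : Set H) (hC : C = {u | Φ u = 0})
    (z : H) (hz : z ∈ C)
    (p : H) (hpN : ∀ y ∈ C, ⟪p, y - z⟫ ≤ 0) (hpΨ : -p = Ψ' z)
    (ε : ℝ → ℝ) (hεpos : ∀ t ≥ 0, 0 < ε t)
    (x x' x'' : ℝ → H)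
    (hx : ∀ t, HasDerivAt x (x' t) t) (hx' : ∀ t, HasDerivAt x' (x'' t) t)
    (hode : ∀ t ≥ (0 : ℝ), x'' t + γ • x' t + Φ' (x t) + ε t • Ψ' (x t) = 0)
    (h h' h'' : ℝ → ℝ)
    (hh : ∀ t, h t = (1 / 2) * ‖x t - z‖ ^ 2)
    (hh' : ∀ t, HasDerivAt h (h' t) t)
    (hh'' : ∀ t, HasDerivAt h' (h'' t) t) :
    ∀ t ≥ (0 : ℝ),
      ((h'' t + γ * h' t : ℝ) : EReal) ≤
        fenchelConj Φ (ε t • p) - suppFn C (ε t • p) + ((‖x' t‖ ^ 2 : ℝ) : EReal) := by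
  -- derivative computations
  have hfun : h = fun t => (1 / 2) * ‖x t - z‖ ^ 2 := funext hh
  have hkey : ∀ t, HasDerivAt h ⟪x t - z, x' t⟫ t := by
    intro t
    have d : HasDerivAt (fun t => x t - z) (x' t) t := (hx t).sub_const z
    have hi := d.inner ℝ d
    have : HasDerivAt (fun t => (1/2 : ℝ) * ⟪x t - z, x t - z⟫)
        ((1/2) * (⟪x t - z, x' t⟫ + ⟪x' t, x t - z⟫)) t := hi.const_mul _
    have heq : (fun t => (1/2 : ℝ) * ⟪x t - z, x t - z⟫) = h := by
      funext s; rw [hh s, real_inner_self_eq_norm_sq]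
    rw [heq] at this
    convert this using 1
    rw [real_inner_comm (x' t) (x t - z)]; ring
  have hh'eq : ∀ t, h' t = ⟪x t - z, x' t⟫ := fun t => (hh' t).unique (hkey t)
  have hh''eq : ∀ t, h'' t = ⟪x' t, x' t⟫ + ⟪x t - z, x'' t⟫ := by
    intro t
    have d : HasDerivAt (fun t => x t - z) (x' t) t := (hx t).sub_const z
    have hi := d.inner ℝ (hx' t)
    have heq : (fun t => ⟪x t - z, x' t⟫) = h' := (funext hh'eq).symm
    rw [heq] at hi
    have := (hh'' t).unique hi
    rw [this]; ring
  intro t ht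
  have hεt := hεpos t ht
  -- real-valued estimate
  have hΦz : Φ z = 0 := by rw [hC] at hz; exact hz
  have hgΦ := grad_le_aux hΦconv (hΦ (x t)) z
  have hgΨ1 := grad_le_aux hΨconv (hΨ (x t)) z
  have hgΨ2 := grad_le_aux hΨconv (hΨ z) (x t)
  have hode' : x'' t + γ • x' t = -(Φ' (x t)) - ε t • Ψ' (x t) := by
    have := hode t ht
    have : x'' t + γ • x' t + Φ' (x t) + ε t • Ψ' (x t) = 0 := this
    linear_combination (norm := module) this
  set r : ℝ := ⟪ε t • p, x t⟫ - Φ (x t) with hr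
  set s : ℝ := ⟪ε t • p, z⟫ with hs
  have hreal : h'' t + γ * h' t ≤ (r - s) + ‖x' t‖ ^ 2 := by
    rw [hh'eq, hh''eq]
    have hexp : ⟪x t - z, x'' t⟫ + γ * ⟪x t - z, x' t⟫
        = ⟪x t - z, x'' t + γ • x' t⟫ := by
      rw [inner_add_right, real_inner_smul_right]
    have hnorm : ⟪x' t, x' t⟫ = ‖x' t‖ ^ 2 := real_inner_self_eq_norm_sq _
    have hsub : ⟪x t - z, x'' t + γ • x' t⟫
        = -⟪x t - z, Φ' (x t)⟫ - ε t * ⟪x t - z, Ψ' (x t)⟫ := by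
      rw [hode', inner_sub_right, inner_neg_right, real_inner_smul_right]
    have h1 : -⟪x t - z, Φ' (x t)⟫ ≤ -Φ (x t) := by
      have : ⟪Φ' (x t), z - x t⟫ = -⟪x t - z, Φ' (x t)⟫ := by
        rw [real_inner_comm, ← inner_neg_left]; simp
      rw [hΦz] at hgΦ; linarith [hgΦ, this.symm.le, this.le]
    have h2 : -(ε t * ⟪x t - z, Ψ' (x t)⟫) ≤ ε t * ⟪p, x t - z⟫ := by
      have hmono : ⟪Ψ' (x t), z - x t⟫ + ⟪Ψ' z, x t - z⟫ ≤ 0 := by linarith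
      have e1 : ⟪Ψ' (x t), z - x t⟫ = -⟪x t - z, Ψ' (x t)⟫ := by
        rw [show z - x t = -(x t - z) by abel, inner_neg_right, real_inner_comm]
      have e2 : ⟪Ψ' z, x t - z⟫ = -⟪p, x t - z⟫ := by
        rw [← hpΨ, inner_neg_left]
      have : -⟪x t - z, Ψ' (x t)⟫ ≤ ⟪p, x t - z⟫ := by
        rw [e1, e2] at hmono; linarith
      calc -(ε t * ⟪x t - z, Ψ' (x t)⟫) = ε t * (-⟪x t - z, Ψ' (x t)⟫) := by ring
        _ ≤ ε t * ⟪p, x t - z⟫ := by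
            exact mul_le_mul_of_nonneg_left this hεt.le
    have hrs : r - s = ε t * ⟪p, x t - z⟫ - Φ (x t) := by
      rw [hr, hs, real_inner_smul_left, real_inner_smul_left, inner_sub_right]; ring
    linarith [hexp, hnorm, hsub, h1, h2, hrs]
  -- support function value
  have hsupp : suppFn C (ε t • p) = ((s : ℝ) : EReal) := by
    apply le_antisymm
    · refine iSup₂_le fun y hy => ?_
      rw [EReal.coe_le_coe_iff]
      have : ⟪ε t • p, y⟫ - ⟪ε t • p, z⟫ = ε t * ⟪p, y - z⟫ := by
        rw [real_inner_smul_left, real_inner_smul_left, inner_sub_right]; ring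
      have hle : ⟪ε t • p, y⟫ - ⟪ε t • p, z⟫ ≤ 0 := by
        rw [this]; exact mul_nonpos_of_nonneg_of_nonpos hεt.le (hpN y hy)
      rw [hs]; linarith
    · exact le_iSup₂ (f := fun y (_ : y ∈ C) => ((⟪ε t • p, y⟫ : ℝ) : EReal)) z hz
  -- Fenchel bound
  have hfen : ((r : ℝ) : EReal) ≤ fenchelConj Φ (ε t • p) :=
    le_iSup (fun u => ((⟪ε t • p, u⟫ - Φ u : ℝ) : EReal)) (x t)
  rw [hsupp]
  have hrw : fenchelConj Φ (ε t • p) - ((s : ℝ) : EReal) + ((‖x' t‖ ^ 2 : ℝ) : EReal)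
      = fenchelConj Φ (ε t • p) + (((-s + ‖x' t‖ ^ 2 : ℝ)) : EReal) := by
    rw [sub_eq_add_neg, ← EReal.coe_neg, add_assoc, ← EReal.coe_add]
  rw [hrw]
  calc ((h'' t + γ * h' t : ℝ) : EReal)
      ≤ (((r - s + ‖x' t‖ ^ 2 : ℝ)) : EReal) := EReal.coe_le_coe_iff.mpr (by linarith)
    _ = ((r : ℝ) : EReal) + (((-s + ‖x' t‖ ^ 2 : ℝ)) : EReal) := by
        rw [← EReal.coe_add, EReal.coe_eq_coe_iff]; ring
    _ ≤ fenchelConj Φ (ε t • p) + (((-s + ‖x' t‖ ^ 2 : ℝ)) : EReal) := by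
        exact add_le_add hfen le_rfl
end
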